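/- For n ≥ 3 and the terminal construction weights, for each j with 2 ≤ j ≤ n-1, the sum a_n + a_{n-1} + ... + â_j + ... + a_2 + a_1 equals (s_{n-j} - 1) · a_j, a multiple of a_j coprime to a_0. -/
import Mathlib

def sylvester : ℕ → ℕ
  | 0 => 2
  | n + 1 => sylvester n * (sylvester n - 1) + 1

lemma sylvester_two_le (k : ℕ) : 2 ≤ sylvester k := by
  induction k with
  | zero => simp [sylvester]
  | succ n ih =>
    show 2 ≤ sylvester n * (sylvester n - 1) + 1
    have h2 : 2 * 1 ≤ sylvester n * (sylvester n - 1) := Nat.mul_le_mul ih (by omega)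
    omega

lemma sylvester_odd {k : ℕ} (hk : 1 ≤ k) : Odd (sylvester k) := by
  obtain ⟨j, rfl⟩ : ∃ j, k = j + 1 := ⟨k - 1, by omega⟩
  show Odd (sylvester j * (sylvester j - 1) + 1)
  have h2 := sylvester_two_le j
  rcases Nat.even_or_odd (sylvester j) with h | h
  · exact (h.mul_right _).add_one
  · have : Even (sylvester j - 1) := Nat.Odd.sub_odd h odd_one
    exact (this.mul_left _).add_one

lemma sylvester_eq {N : ℕ} (hN : 1 ≤ N) :
    sylvester N = 2 * (∏ i ∈ Finset.Ico 1 N, sylvester i) + 1 := by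
  induction N, hN using Nat.le_induction with
  | base => simp [sylvester]
  | succ N hN ih =>
    rw [Finset.prod_Ico_succ_top hN]
    show sylvester N * (sylvester N - 1) + 1 = _
    have h1 : sylvester N - 1 = 2 * (∏ i ∈ Finset.Ico 1 N, sylvester i) := by omega
    rw [h1, ih]
    ring

lemma prod_odd (N : ℕ) : Odd (∏ i ∈ Finset.Ico 1 N, sylvester i) := by
  induction N with
  | zero => simp
  | succ N ih =>
    rcases Nat.eq_zero_or_pos N with h | h
    · subst h; simp
    · rw [Finset.prod_Ico_succ_top h]
      exact ih.mul (sylvester_odd h)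

lemma sum_Q (N : ℕ) :
    2 * (∑ m ∈ Finset.Ico 1 N, ∏ i ∈ (Finset.Ico 1 N).erase m, sylvester i) + 1
      = ∏ i ∈ Finset.Ico 1 N, sylvester i := by
  induction N with
  | zero => simp
  | succ N ih =>
    rcases Nat.eq_zero_or_pos N with h | h
    · subst h; simp
    · have hstep : ∀ m ∈ Finset.Ico 1 N,
          (∏ i ∈ (Finset.Ico 1 (N + 1)).erase m, sylvester i)
            = (∏ i ∈ (Finset.Ico 1 N).erase m, sylvester i) * sylvester N := by
        intro m hm
        have hm' : m ∈ Finset.Ico 1 (N + 1) := by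
          simp only [Finset.mem_Ico] at hm ⊢; omega
        have h1 : (∏ i ∈ (Finset.Ico 1 (N + 1)).erase m, sylvester i) * sylvester m
            = ∏ i ∈ Finset.Ico 1 (N + 1), sylvester i := Finset.prod_erase_mul _ _ hm'
        have h2 : (∏ i ∈ (Finset.Ico 1 N).erase m, sylvester i) * sylvester m
            = ∏ i ∈ Finset.Ico 1 N, sylvester i := Finset.prod_erase_mul _ _ hm
        have h3 : (∏ i ∈ Finset.Ico 1 (N + 1), sylvester i)
            = (∏ i ∈ Finset.Ico 1 N, sylvester i) * sylvester N :=
          Finset.prod_Ico_succ_top h _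
        have hpos : 0 < sylvester m := by have := sylvester_two_le m; omega
        apply Nat.eq_of_mul_eq_mul_right hpos
        rw [h1, h3, ← h2]; ring
      have hN1 : N ∈ Finset.Ico 1 (N + 1) := by simp [Finset.mem_Ico]; omega
      have hlast : (∏ i ∈ (Finset.Ico 1 (N + 1)).erase N, sylvester i)
          = ∏ i ∈ Finset.Ico 1 N, sylvester i := by
        have h1 : (∏ i ∈ (Finset.Ico 1 (N + 1)).erase N, sylvester i) * sylvester N
            = ∏ i ∈ Finset.Ico 1 (N + 1), sylvester i := Finset.prod_erase_mul _ _ hN1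
        have h3 : (∏ i ∈ Finset.Ico 1 (N + 1), sylvester i)
            = (∏ i ∈ Finset.Ico 1 N, sylvester i) * sylvester N :=
          Finset.prod_Ico_succ_top h _
        have hpos : 0 < sylvester N := by have := sylvester_two_le N; omega
        apply Nat.eq_of_mul_eq_mul_right hpos
        rw [h1, h3]
      rw [Finset.sum_Ico_succ_top h, Finset.sum_congr rfl hstep, hlast, ← Finset.sum_mul,
        Finset.prod_Ico_succ_top h, sylvester_eq h]
      set P := ∏ i ∈ Finset.Ico 1 N, sylvester i with hP
      set SS := ∑ m ∈ Finset.Ico 1 N, ∏ i ∈ (Finset.Ico 1 N).erase m, sylvester i with hSg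
      have hP' : P = 2 * SS + 1 := ih.symm
      rw [hP']; ring

theorem terminal_weights_aj_relation (n : ℕ) (hn : 3 ≤ n)
    (a : ℕ → ℕ)
    (ha0 : a 0 = (sylvester (n - 1) - 1) / 2 - 1)
    (ha1 : a 1 = (sylvester (n - 1) - 1) / 2)
    (hai : ∀ i, 2 ≤ i → i ≤ n - 1 →
      a i = (sylvester (n - 1) - 1) * (sylvester (n - 1) - 2) / (2 * sylvester (n - i)))
    (han : a n = ((sylvester (n - 1) - 1) * (sylvester (n - 1) - 2) / 2 - 1) / 2) :
    ∀ j, 2 ≤ j → j ≤ n - 1 →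
      a n + a 1 + (∑ i ∈ (Finset.Icc 2 (n - 1)).erase j, a i)
        = (sylvester (n - j) - 1) * a j
      ∧ Nat.Coprime (a 0) (a j) := by
  intro j hj2 hjn
  set u := ∏ i ∈ Finset.Ico 1 (n - 1), sylvester i with hu
  have hSu : sylvester (n - 1) = 2 * u + 1 := sylvester_eq (by omega)
  obtain ⟨w, hw⟩ := prod_odd (n - 1)
  rw [← hu] at hw
  have hw' : u = 2 * w + 1 := by omega
  have h4w1 : 2 * u - 1 = 4 * w + 1 := by omega
  -- per-index formula
  have key : ∀ m ∈ Finset.Ico 1 (n - 1),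
      (sylvester (n - 1) - 1) * (sylvester (n - 1) - 2) / (2 * sylvester m)
        = (∏ i ∈ (Finset.Ico 1 (n - 1)).erase m, sylvester i) * (4 * w + 1) := by
    intro m hm
    have hQ : (∏ i ∈ (Finset.Ico 1 (n - 1)).erase m, sylvester i) * sylvester m = u :=
      Finset.prod_erase_mul _ _ hm
    have hpos : 0 < 2 * sylvester m := by have := sylvester_two_le m; omega
    have h1 : sylvester (n - 1) - 1 = 2 * u := by omega
    have h2 : sylvester (n - 1) - 2 = 4 * w + 1 := by omega
    rw [h1, h2]
    have h3 : 2 * u * (4 * w + 1)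
        = (2 * sylvester m) * ((∏ i ∈ (Finset.Ico 1 (n - 1)).erase m, sylvester i) * (4 * w + 1)) := by
      rw [← hQ]; ring
    rw [h3, Nat.mul_div_cancel_left _ hpos]
  have ha1' : a 1 = u := by rw [ha1, hSu]; omega
  have han' : a n = 4 * w ^ 2 + 3 * w := by
    rw [han, hSu]
    have hA : 2 * u + 1 - 1 = 4 * w + 2 := by omega
    have hB : 2 * u + 1 - 2 = 4 * w + 1 := by omega
    rw [hA, hB]
    have hC : (4 * w + 2) * (4 * w + 1) = 2 * (8 * w ^ 2 + 6 * w + 1) := by ring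
    rw [hC]
    set W := w ^ 2 with hW
    omega
  have hmj : n - j ∈ Finset.Ico 1 (n - 1) := by simp only [Finset.mem_Ico]; omega
  have haj : a j = (∏ i ∈ (Finset.Ico 1 (n - 1)).erase (n - j), sylvester i) * (4 * w + 1) := by
    rw [hai j hj2 hjn, key _ hmj]
  -- sum over Icc 2 (n-1)
  have hsum : ∑ i ∈ Finset.Icc 2 (n - 1), a i = (4 * w + 1) * w := by
    have hcong : ∀ i ∈ Finset.Icc 2 (n - 1),
        a i = (∏ k ∈ (Finset.Ico 1 (n - 1)).erase (n - i), sylvester k) * (4 * w + 1) := by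
      intro i hi
      simp only [Finset.mem_Icc] at hi
      have hmi : n - i ∈ Finset.Ico 1 (n - 1) := by simp only [Finset.mem_Ico]; omega
      rw [hai i hi.1 hi.2, key _ hmi]
    rw [Finset.sum_congr rfl hcong, ← Finset.sum_mul]
    have hre : ∑ i ∈ Finset.Icc 2 (n - 1), (∏ k ∈ (Finset.Ico 1 (n - 1)).erase (n - i), sylvester k)
        = ∑ m ∈ Finset.Ico 1 (n - 1), (∏ k ∈ (Finset.Ico 1 (n - 1)).erase m, sylvester k) := by
      apply Finset.sum_nbij' (fun i => n - i) (fun m => n - m)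
      · intro i hi; simp only [Finset.mem_Icc] at hi; simp only [Finset.mem_Ico]; omega
      · intro m hm; simp only [Finset.mem_Ico] at hm; simp only [Finset.mem_Icc]; omega
      · intro i hi; simp only [Finset.mem_Icc] at hi; omega
      · intro m hm; simp only [Finset.mem_Ico] at hm; omega
      · intro i hi; rfl
    rw [hre]
    have hsq := sum_Q (n - 1)
    rw [← hu] at hsq
    have hSw : (∑ m ∈ Finset.Ico 1 (n - 1), ∏ k ∈ (Finset.Ico 1 (n - 1)).erase m, sylvester k) = w := by
      omega
    rw [hSw, mul_comm]
  have hjmem : j ∈ Finset.Icc 2 (n - 1) := by simp only [Finset.mem_Icc]; omega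
  have herase : a j + ∑ i ∈ (Finset.Icc 2 (n - 1)).erase j, a i = ∑ i ∈ Finset.Icc 2 (n - 1), a i :=
    Finset.add_sum_erase _ _ hjmem
  have hsj : (∏ k ∈ (Finset.Ico 1 (n - 1)).erase (n - j), sylvester k) * sylvester (n - j) = u :=
    Finset.prod_erase_mul _ _ hmj
  constructor
  · have hRHS : sylvester (n - j) * a j = (2 * w + 1) * (4 * w + 1) := by
      rw [haj]
      calc sylvester (n - j) * ((∏ k ∈ (Finset.Ico 1 (n - 1)).erase (n - j), sylvester k) * (4 * w + 1))
          = ((∏ k ∈ (Finset.Ico 1 (n - 1)).erase (n - j), sylvester k) * sylvester (n - j)) * (4 * w + 1) := by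
            ring
        _ = u * (4 * w + 1) := by rw [hsj]
        _ = (2 * w + 1) * (4 * w + 1) := by rw [hw']
    have hfin : a n + a 1 + (∑ i ∈ (Finset.Icc 2 (n - 1)).erase j, a i) + a j
        = sylvester (n - j) * a j := by
      calc a n + a 1 + (∑ i ∈ (Finset.Icc 2 (n - 1)).erase j, a i) + a j
          = a n + a 1 + (a j + ∑ i ∈ (Finset.Icc 2 (n - 1)).erase j, a i) := by ring
        _ = a n + a 1 + ∑ i ∈ Finset.Icc 2 (n - 1), a i := by rw [herase]
        _ = (4 * w ^ 2 + 3 * w) + (2 * w + 1) + (4 * w + 1) * w := by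
            rw [han', ha1', hsum, hw']
        _ = (2 * w + 1) * (4 * w + 1) := by ring
        _ = sylvester (n - j) * a j := hRHS.symm
    rw [Nat.sub_one_mul]
    exact Nat.eq_sub_of_add_eq hfin
  · have ha0' : a 0 = 2 * w := by rw [ha0, hSu]; omega
    have hdvd : a j ∣ u * (4 * w + 1) := by
      refine ⟨sylvester (n - j), ?_⟩
      rw [haj, ← hsj]; ring
    have hval : u * (4 * w + 1) = 1 + (2 * w) * (4 * w + 3) := by rw [hw']; ring
    have hcop : Nat.Coprime (2 * w) (u * (4 * w + 1)) := by
      rw [hval, Nat.coprime_add_mul_left_right]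
      exact Nat.coprime_one_right (2 * w)
    rw [ha0']
    exact Nat.Coprime.coprime_dvd_right hdvd hcop
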